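/- arXiv:1510.07296 — 2 statements merged into one kernel-verified Lean document; each statement's English description precedes it below -/
import Mathlib

section
/- Consider the system v'(t) ≥ -(ω₅ + 1/ω₈) v(t), v(0) = v₀ > 0, and r'(t) = (ω₁₀ - ω₁₁/(v(t) + ω₁₂)) r(t)², r(0) = r₀ > 0, with positive parameters ω₅, ω₈, ω₁₀, ω₁₁, ω₁₂ and δ₁ ∈ (0, ω₁₀) such that M := ω₁₁/(ω₁₀ - δ₁) - ω₁₂ > 0. If r₀ · ln(v₀/M) > (ω₅ + 1/ω₈)/δ₁ (in particular v₀ > M), then r blows up in finite time: there exists T* ≤ 1/(δ₁ r₀) such that r(t) → ∞ as t → T*⁻. -/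
open Real Filter Set Topology

set_option maxHeartbeats 1000000 in
/-- Blow-up theorem: if r₀ ln(v₀/M) > (ω₅ + 1/ω₈)/δ₁, there is no solution of
the coupled system (v' ≥ -(ω₅+1/ω₈)v, r' = (ω₁₀ - ω₁₁/(v+ω₁₂)) r²) on any
interval [0,T) with T > 1/(δ₁ r₀); i.e. r blows up at some T* ≤ 1/(δ₁ r₀). -/
theorem interference_blowup (ω₅ ω₈ ω₁₀ ω₁₁ ω₁₂ δ₁ v₀ r₀ M T : ℝ)
    (h5 : 0 < ω₅) (h8 : 0 < ω₈) (h10 : 0 < ω₁₀) (h11 : 0 < ω₁₁)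
    (h12 : 0 < ω₁₂) (hδ : 0 < δ₁) (hδ10 : δ₁ < ω₁₀)
    (hM : M = ω₁₁ / (ω₁₀ - δ₁) - ω₁₂) (hMpos : 0 < M)
    (hv₀ : 0 < v₀) (hv₀M : M < v₀) (hr₀ : 0 < r₀)
    (hlarge : r₀ * Real.log (v₀ / M) > (ω₅ + 1 / ω₈) / δ₁)
    (hT : T > 1 / (δ₁ * r₀))
    (v v' r : ℝ → ℝ) (hv0 : v 0 = v₀) (hr0 : r 0 = r₀)
    (hvd : ∀ t ≥ (0:ℝ), HasDerivAt v (v' t) t)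
    (hvineq : ∀ t ≥ (0:ℝ), v' t ≥ -(ω₅ + 1 / ω₈) * v t)
    (hrd : ∀ t ∈ Ico (0:ℝ) T,
      HasDerivAt r ((ω₁₀ - ω₁₁ / (v t + ω₁₂)) * (r t) ^ 2) t) :
    False := by
  set c : ℝ := ω₅ + 1 / ω₈ with hc
  have hcpos : 0 < c := by positivity
  set tstar : ℝ := 1 / (δ₁ * r₀) with htstar
  have htstarpos : 0 < tstar := by positivity
  set t₁ : ℝ := Real.log (v₀ / M) / c with ht₁
  have hlogpos : 0 < Real.log (v₀ / M) := by
    apply Real.log_pos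
    rw [lt_div_iff₀ hMpos]; linarith
  -- tstar < t₁
  have hstar1 : tstar < t₁ := by
    rw [htstar, ht₁, div_lt_div_iff₀ (by positivity) hcpos]
    have := (div_lt_iff₀ hδ).mp hlarge
    nlinarith
  obtain ⟨t₂, ht2l, ht2r⟩ := exists_between (lt_min hstar1 hT)
  have ht₂T : t₂ < T := lt_of_lt_of_le ht2r (min_le_right _ _)
  have ht₂1 : t₂ < t₁ := lt_of_lt_of_le ht2r (min_le_left _ _)
  have ht₂pos : 0 < t₂ := htstarpos.trans ht2l
  -- lower bound for v
  have hvlb : ∀ t ∈ Icc (0:ℝ) t₂, M < v t := by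
    intro t ht
    have hmono : MonotoneOn (fun t => v t * Real.exp (c * t)) (Ici (0:ℝ)) := by
      have hcont : ∀ x ∈ Ici (0:ℝ), ContinuousAt (fun t => v t * Real.exp (c * t)) x := by
        intro x hx
        exact ((hvd x hx).continuousAt.mul
          ((Real.continuous_exp.comp (continuous_const.mul continuous_id)).continuousAt))
      apply monotoneOn_of_deriv_nonneg (convex_Ici 0)
        (fun x hx => (hcont x hx).continuousWithinAt)
      · intro x hx
        rw [interior_Ici] at hx
        exact (((hvd x hx.le).mul
          (((hasDerivAt_id x).const_mul c).exp)).differentiableAt.differentiableWithinAt)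
      · intro x hx
        rw [interior_Ici] at hx
        have hg : HasDerivAt (fun t => v t * Real.exp (c * t))
            (v' x * Real.exp (c * x) + v x * (Real.exp (c * x) * (c * 1))) x :=
          (hvd x hx.le).mul (((hasDerivAt_id x).const_mul c).exp)
        rw [hg.deriv]
        have := hvineq x hx.le
        have := Real.exp_pos (c * x)
        nlinarith
    have h0 : (0:ℝ) ∈ Ici (0:ℝ) := Set.self_mem_Ici
    have ht' : t ∈ Ici (0:ℝ) := ht.1
    have := hmono h0 ht' ht.1
    simp only [mul_zero, Real.exp_zero, mul_one, hv0] at this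
    -- v₀ ≤ v t * exp (c t)
    have hvt : v₀ * Real.exp (-(c * t)) ≤ v t := by
      have he : Real.exp (c * t) * Real.exp (-(c * t)) = 1 := by
        rw [← Real.exp_add]; simp
      have h2 : v₀ * Real.exp (-(c * t)) ≤ v t * Real.exp (c * t) * Real.exp (-(c * t)) :=
        mul_le_mul_of_nonneg_right this (Real.exp_pos _).le
      have h3 : v t * Real.exp (c * t) * Real.exp (-(c * t)) = v t := by
        rw [mul_assoc, he, mul_one]
      linarith
    have hMe : M = v₀ * Real.exp (Real.log (M / v₀)) := by
      rw [Real.exp_log (by positivity)]; field_simp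
    have hlt : Real.log (M / v₀) < -(c * t) := by
      have : Real.log (M / v₀) = - Real.log (v₀ / M) := by
        rw [← Real.log_inv]; congr 1; field_simp
      rw [this, neg_lt_neg_iff]
      have h1 : c * t ≤ c * t₂ := mul_le_mul_of_nonneg_left ht.2 hcpos.le
      have h2 : c * t₂ < c * t₁ := mul_lt_mul_of_pos_left ht₂1 hcpos
      have h3 : c * t₁ = Real.log (v₀ / M) := by
        rw [ht₁, mul_comm, div_mul_cancel₀ _ (ne_of_gt hcpos)]
      exact lt_of_le_of_lt h1 (h3 ▸ h2)
    calc M = v₀ * Real.exp (Real.log (M / v₀)) := hMe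
      _ < v₀ * Real.exp (-(c * t)) := by
          apply mul_lt_mul_of_pos_left (Real.exp_lt_exp.mpr hlt) hv₀
      _ ≤ v t := hvt
  -- the coefficient is ≥ δ₁ on [0, t₂]
  have hf : ∀ t ∈ Icc (0:ℝ) t₂, δ₁ ≤ ω₁₀ - ω₁₁ / (v t + ω₁₂) := by
    intro t ht
    have hv := hvlb t ht
    have hMω : M + ω₁₂ = ω₁₁ / (ω₁₀ - δ₁) := by rw [hM]; ring
    have hd : 0 < ω₁₀ - δ₁ := by linarith
    have hvpos : 0 < v t + ω₁₂ := by
      have : 0 < M + ω₁₂ := by positivity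
      linarith
    have h1 : ω₁₁ / (v t + ω₁₂) ≤ ω₁₀ - δ₁ := by
      rw [div_le_iff₀ hvpos]
      have h2 : ω₁₁ / (ω₁₀ - δ₁) < v t + ω₁₂ := by rw [← hMω]; linarith
      have h3 : ω₁₁ = (ω₁₀ - δ₁) * (ω₁₁ / (ω₁₀ - δ₁)) := by field_simp
      nlinarith
    linarith
  -- r continuous on [0, t₂]
  have hrc : ∀ t ∈ Icc (0:ℝ) t₂, ContinuousAt r t := by
    intro t ht
    exact (hrd t ⟨ht.1, lt_of_le_of_lt ht.2 ht₂T⟩).continuousAt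
  -- key estimate: if r > 0 on [0, s] ⊆ [0, t₂], then 1/r u + δ₁ u ≤ 1/r₀ on [0, s]
  have key : ∀ s, s ∈ Icc (0:ℝ) t₂ → (∀ u ∈ Icc (0:ℝ) s, 0 < r u) →
      ∀ u ∈ Icc (0:ℝ) s, (r u)⁻¹ + δ₁ * u ≤ r₀⁻¹ := by
    intro s hs hpos u hu
    have hsub : Icc (0:ℝ) s ⊆ Icc (0:ℝ) t₂ := Icc_subset_Icc le_rfl hs.2
    have hanti : AntitoneOn (fun u => (r u)⁻¹ + δ₁ * u) (Icc 0 s) := by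
      have hcont : ContinuousOn (fun u => (r u)⁻¹ + δ₁ * u) (Icc 0 s) := by
        intro x hx
        exact (((hrc x (hsub hx)).inv₀ (ne_of_gt (hpos x hx))).add
          (continuousAt_const.mul continuousAt_id)).continuousWithinAt
      apply antitoneOn_of_deriv_nonpos (convex_Icc 0 s) hcont
      · intro x hx
        rw [interior_Icc] at hx
        have hx' : x ∈ Icc (0:ℝ) s := ⟨hx.1.le, hx.2.le⟩
        have hrx : r x ≠ 0 := ne_of_gt (hpos x hx')
        exact (((hrd x ⟨hx'.1, lt_of_le_of_lt (hx'.2.trans hs.2) ht₂T⟩).inv hrx).add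
          ((hasDerivAt_id x).const_mul δ₁)).differentiableAt.differentiableWithinAt
      · intro x hx
        rw [interior_Icc] at hx
        have hx' : x ∈ Icc (0:ℝ) s := ⟨hx.1.le, hx.2.le⟩
        have hrx : r x ≠ 0 := ne_of_gt (hpos x hx')
        have hd : HasDerivAt (fun u => (r u)⁻¹ + δ₁ * u)
            (-((ω₁₀ - ω₁₁ / (v x + ω₁₂)) * (r x) ^ 2) / (r x) ^ 2 + δ₁ * 1) x := by
          exact ((hrd x ⟨hx'.1, lt_of_le_of_lt (hx'.2.trans hs.2) ht₂T⟩).inv hrx).add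
            ((hasDerivAt_id x).const_mul δ₁)
        rw [hd.deriv]
        have hfx := hf x (hsub hx')
        have : -((ω₁₀ - ω₁₁ / (v x + ω₁₂)) * (r x) ^ 2) / (r x) ^ 2
            = -(ω₁₀ - ω₁₁ / (v x + ω₁₂)) := by
          rw [neg_div, mul_div_assoc, div_self (pow_ne_zero 2 hrx), mul_one]
        rw [this]; linarith
    have h0 : (0:ℝ) ∈ Icc (0:ℝ) s := ⟨le_rfl, hu.1.trans hu.2⟩
    have := hanti h0 hu hu.1
    simpa [hr0] using this
  -- helper: positivity on an [0,s] with s > tstar gives contradiction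
  have contra : ∀ s, s ∈ Icc (0:ℝ) t₂ → tstar < s →
      (∀ u ∈ Icc (0:ℝ) s, 0 < r u) → False := by
    intro s hs hss hpos
    have h1 := key s hs hpos s ⟨hs.1, le_rfl⟩
    have h2 : 0 < (r s)⁻¹ := by
      have := hpos s ⟨hs.1, le_rfl⟩; positivity
    have h3 : r₀⁻¹ < δ₁ * s := by
      have : δ₁ * tstar = r₀⁻¹ := by
        rw [htstar]; field_simp
      nlinarith
    linarith
  -- Now: either r > 0 on all of [0, t₂] (contradiction via contra), or there is
  -- a first zero τ
  by_cases hK : ∃ t ∈ Icc (0:ℝ) t₂, r t ≤ 0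
  · -- first zero
    have hKcl : IsClosed (Icc (0:ℝ) t₂ ∩ r ⁻¹' Iic 0) :=
      ContinuousOn.preimage_isClosed_of_isClosed
        (fun t ht => (hrc t ht).continuousWithinAt) isClosed_Icc isClosed_Iic
    have hKbdd : BddBelow (Icc (0:ℝ) t₂ ∩ r ⁻¹' Iic 0) := ⟨0, fun t ht => ht.1.1⟩
    have hKne : (Icc (0:ℝ) t₂ ∩ r ⁻¹' Iic 0).Nonempty := by
      obtain ⟨t, ht, hrt⟩ := hK; exact ⟨t, ht, hrt⟩
    obtain ⟨τ, hτK, hτlb⟩ : ∃ τ ∈ Icc (0:ℝ) t₂ ∩ r ⁻¹' Iic 0,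
        ∀ t ∈ Icc (0:ℝ) t₂ ∩ r ⁻¹' Iic 0, τ ≤ t :=
      ⟨sInf _, hKcl.csInf_mem hKne hKbdd, fun t ht => csInf_le hKbdd ht⟩
    have hτIcc : τ ∈ Icc (0:ℝ) t₂ := hτK.1
    have hrτ : r τ ≤ 0 := hτK.2
    have hτpos : 0 < τ := by
      rcases lt_or_eq_of_le hτIcc.1 with h | h
      · exact h
      · exfalso; rw [← h] at hrτ; rw [hr0] at hrτ; linarith
    have hposlt : ∀ u ∈ Icc (0:ℝ) t₂, u < τ → 0 < r u := by
      intro u hu hlt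
      by_contra h
      push_neg at h
      have := hτlb u ⟨hu, h⟩
      linarith
    by_cases hτstar : tstar < τ
    · obtain ⟨s, hsl, hsr⟩ := exists_between hτstar
      have hsIcc : s ∈ Icc (0:ℝ) t₂ := ⟨(htstarpos.trans hsl).le, hsr.le.trans hτIcc.2⟩
      exact contra s hsIcc hsl fun u hu =>
        hposlt u ⟨hu.1, hu.2.trans hsIcc.2⟩ (lt_of_le_of_lt hu.2 hsr)
    · -- τ ≤ tstar : show r τ ≥ r₀ > 0, contradiction
      push_neg at hτstar
      have hlb : ∀ u ∈ Ioo (0:ℝ) τ, r₀ ≤ r u := by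
        intro u hu
        have huIcc : u ∈ Icc (0:ℝ) t₂ := ⟨hu.1.le, hu.2.le.trans hτIcc.2⟩
        have hposu : ∀ w ∈ Icc (0:ℝ) u, 0 < r w := fun w hw =>
          hposlt w ⟨hw.1, hw.2.trans huIcc.2⟩ (lt_of_le_of_lt hw.2 hu.2)
        have h1 := key u huIcc hposu u ⟨hu.1.le, le_rfl⟩
        have h2 : 0 < r u := hposu u ⟨hu.1.le, le_rfl⟩
        have h3 : (r u)⁻¹ ≤ r₀⁻¹ := by
          have h4 : 0 ≤ δ₁ * u := mul_nonneg hδ.le hu.1.le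
          linarith
        exact (inv_le_inv₀ h2 hr₀).mp h3
      have htend : Tendsto r (𝓝[<] τ) (𝓝 (r τ)) :=
        ((hrc τ hτIcc).continuousWithinAt).tendsto
      have hev : ∀ᶠ u in 𝓝[<] τ, r₀ ≤ r u := by
        filter_upwards [Ioo_mem_nhdsLT_of_mem (⟨hτpos, le_rfl⟩ : τ ∈ Ioc 0 τ)] with u hu
        exact hlb u hu
      have := ge_of_tendsto htend hev
      linarith
  · push_neg at hK
    exact contra t₂ ⟨ht₂pos.le, le_rfl⟩ ht2l fun u hu => hK u hu
end

section
/- Let ω₅, ω₈, ω₁₀, ω₁₁ > 0, v₀ > 0, r₀ > 0, and set a := ω₅ + 1/ω₈. Suppose there exists T₁ > 0 such that e^{a T₁} < v₀ a ((ω₁₀/ω₁₁) T₁ - 1/(ω₁₁ r₀)) + 1. If v(t) ≥ v₀ e^{-a t} for all t, then ψ(T₁) := 1/r₀ - ω₁₀ T₁ + ∫₀^{T₁} ω₁₁/(v(s)+ω₁₂) ds < 0, where ω₁₂ ≥ 0. -/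
open Real Filter Set intervalIntegral

/-- Key inequality: if e^{aT₁} < v₀ a ((ω₁₀/ω₁₁)T₁ - 1/(ω₁₁ r₀)) + 1 with
a = ω₅ + 1/ω₈, and v(t) ≥ v₀ e^{-a t}, then ψ(T₁) < 0. -/
theorem psi_negative (ω₅ ω₈ ω₁₀ ω₁₁ ω₁₂ v₀ r₀ a T₁ : ℝ)
    (h5 : 0 < ω₅) (h8 : 0 < ω₈) (h10 : 0 < ω₁₀) (h11 : 0 < ω₁₁)
    (h12 : 0 ≤ ω₁₂) (hv₀ : 0 < v₀) (hr₀ : 0 < r₀)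
    (ha : a = ω₅ + 1 / ω₈) (hT₁ : 0 < T₁)
    (hcond : Real.exp (a * T₁) <
      v₀ * a * ((ω₁₀ / ω₁₁) * T₁ - 1 / (ω₁₁ * r₀)) + 1)
    (v : ℝ → ℝ) (hvcont : Continuous v)
    (hv : ∀ t ≥ (0:ℝ), v t ≥ v₀ * Real.exp (-a * t)) :
    1 / r₀ - ω₁₀ * T₁ + (∫ s in (0:ℝ)..T₁, ω₁₁ / (v s + ω₁₂)) < 0 := by
  have haa : 0 < a := by
    rw [ha]; positivity
  -- positivity of v s + ω₁₂ on [0, T₁]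
  have hvpos : ∀ s ∈ Set.uIcc (0:ℝ) T₁, 0 < v s + ω₁₂ := by
    intro s hs
    rw [Set.uIcc_of_le hT₁.le] at hs
    have h1 : v₀ * Real.exp (-a * s) ≤ v s := hv s hs.1
    have h2 : 0 < v₀ * Real.exp (-a * s) := by positivity
    linarith
  -- integrability of integrand
  have hcontI : ContinuousOn (fun s => ω₁₁ / (v s + ω₁₂)) (Set.uIcc (0:ℝ) T₁) :=
    ContinuousOn.div continuousOn_const ((hvcont.add continuous_const).continuousOn)
      (fun s hs => (hvpos s hs).ne')
  have hint1 : IntervalIntegrable (fun s => ω₁₁ / (v s + ω₁₂)) MeasureTheory.volume 0 T₁ :=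
    hcontI.intervalIntegrable
  have hint2 : IntervalIntegrable (fun s => (ω₁₁ / v₀) * Real.exp (a * s))
      MeasureTheory.volume 0 T₁ :=
    (Continuous.intervalIntegrable (by continuity) 0 T₁)
  -- pointwise bound
  have hmono : (∫ s in (0:ℝ)..T₁, ω₁₁ / (v s + ω₁₂)) ≤
      ∫ s in (0:ℝ)..T₁, (ω₁₁ / v₀) * Real.exp (a * s) := by
    apply intervalIntegral.integral_mono_on hT₁.le hint1 hint2
    intro s hs
    have hs0 : (0:ℝ) ≤ s := hs.1
    have h1 : v₀ * Real.exp (-a * s) ≤ v s := hv s hs0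
    have hvs : 0 < v s + ω₁₂ := by
      have : 0 < v₀ * Real.exp (-a * s) := by positivity
      linarith
    have hlb : v₀ * Real.exp (-a * s) ≤ v s + ω₁₂ := by linarith
    have hlbpos : 0 < v₀ * Real.exp (-a * s) := by positivity
    rw [div_le_iff₀ hvs]
    have key : ω₁₁ ≤ (ω₁₁ / v₀ * Real.exp (a * s)) * (v₀ * Real.exp (-a * s)) := by
      have : (ω₁₁ / v₀ * Real.exp (a * s)) * (v₀ * Real.exp (-a * s)) = ω₁₁ := by
        field_simp
        rw [← Real.exp_add]
        simp
      linarith [this.ge]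
    calc ω₁₁ ≤ (ω₁₁ / v₀ * Real.exp (a * s)) * (v₀ * Real.exp (-a * s)) := key
      _ ≤ (ω₁₁ / v₀ * Real.exp (a * s)) * (v s + ω₁₂) := by
          apply mul_le_mul_of_nonneg_left hlb
          positivity
  -- compute the bounding integral
  have hcomp : (∫ s in (0:ℝ)..T₁, (ω₁₁ / v₀) * Real.exp (a * s)) =
      (ω₁₁ / (v₀ * a)) * (Real.exp (a * T₁) - 1) := by
    rw [intervalIntegral.integral_const_mul]
    have : (∫ s in (0:ℝ)..T₁, Real.exp (a * s)) = (Real.exp (a * T₁) - 1) / a := by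
      have h := intervalIntegral.integral_comp_mul_left (fun x => Real.exp x)
        (a := (0:ℝ)) (b := T₁) haa.ne'
      simp only [mul_zero] at h
      rw [h, integral_exp, Real.exp_zero, smul_eq_mul]
      field_simp
    rw [this]
    field_simp
  -- conclude
  have hfinal : (ω₁₁ / (v₀ * a)) * (Real.exp (a * T₁) - 1) < ω₁₀ * T₁ - 1 / r₀ := by
    have h1 : Real.exp (a * T₁) - 1 < v₀ * a * ((ω₁₀ / ω₁₁) * T₁ - 1 / (ω₁₁ * r₀)) := by
      linarith
    have hva : 0 < v₀ * a := by positivity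
    have h2 : (ω₁₁ / (v₀ * a)) * (Real.exp (a * T₁) - 1) <
        (ω₁₁ / (v₀ * a)) * (v₀ * a * ((ω₁₀ / ω₁₁) * T₁ - 1 / (ω₁₁ * r₀))) := by
      apply mul_lt_mul_of_pos_left h1
      positivity
    have h3 : (ω₁₁ / (v₀ * a)) * (v₀ * a * ((ω₁₀ / ω₁₁) * T₁ - 1 / (ω₁₁ * r₀))) =
        ω₁₀ * T₁ - 1 / r₀ := by
      field_simp
    linarith
  linarith [hmono.trans_lt (hcomp ▸ hfinal)]
end
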